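/- Let $(\Omega, \mathcal{F}, \mathbb{P})$ be a probability space, $r \in [1, 2]$, and $0 < \underline{C} \leq \overline{C} < \infty$. Let $\kappa, \kappa' : \Omega \to [\underline{C}, \overline{C}]$ be measurable with $\mathbb{E}[|\kappa - \kappa'|^r]^{1/r} \leq \delta$, and let $\phi, \phi' : \Omega \to \mathbb{R}$ be measurable with $|\phi'| \leq B$ almost surely and $\mathbb{E}[|\phi - \phi'|^r]^{1/r} \leq \delta'$. Define $H_1 = \kappa / \max\{\kappa, \kappa'\}$ and $H_2 = \kappa' / \max\{\kappa, \kappa'\}$. Then $\mathbb{E}\left[|\phi H_1 - \phi' H_2|^r\right]^{1/r} \leq \delta' + \frac{B}{\underline{C}}\,\delta$. -/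

import Mathlib

open MeasureTheory

lemma lint_eq_eLpNorm' {Ω : Type*} [MeasurableSpace Ω] (μ : Measure Ω)
    (g : Ω → ℝ) {r : ℝ} (hr0 : 0 ≤ r) :
    (∫⁻ ω, ENNReal.ofReal (|g ω| ^ r) ∂μ) ^ (1 / r) = eLpNorm' g r μ := by
  simp only [eLpNorm']
  congr 1
  refine lintegral_congr fun ω => ?_
  rw [← ENNReal.ofReal_rpow_of_nonneg (abs_nonneg _) hr0,
    Real.enorm_eq_ofReal_abs]

/-- The single-time-step mechanism of Lemma 2: with likelihood evaluations
`κ, κ'` taking values in `[C̲, C̄]`, max-coupling weights `H₁ = κ / max κ κ'`,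
`H₂ = κ' / max κ κ'`, and test-function evaluations `φ, φ'` with `|φ'| ≤ B`
a.s., one has `E[|φ H₁ - φ' H₂|^r]^{1/r} ≤ δ' + (B/C̲) δ` whenever
`E[|κ - κ'|^r]^{1/r} ≤ δ` and `E[|φ - φ'|^r]^{1/r} ≤ δ'`. -/
theorem max_coupling_weight_Lr_bound
    {Ω : Type*} [MeasurableSpace Ω] (μ : Measure Ω) [IsProbabilityMeasure μ]
    (r : ℝ) (hr1 : 1 ≤ r) (hr2 : r ≤ 2)
    (Cl Cu : ℝ) (hCl : 0 < Cl) (hClu : Cl ≤ Cu)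
    (κ κ' : Ω → ℝ) (hκm : Measurable κ) (hκ'm : Measurable κ')
    (hκ : ∀ ω, Cl ≤ κ ω ∧ κ ω ≤ Cu) (hκ' : ∀ ω, Cl ≤ κ' ω ∧ κ' ω ≤ Cu)
    (δ : ℝ) (hδ : 0 ≤ δ)
    (hκκ' : (∫⁻ ω, ENNReal.ofReal (|κ ω - κ' ω| ^ r) ∂μ) ^ (1 / r)
      ≤ ENNReal.ofReal δ)
    (φ φ' : Ω → ℝ) (hφm : Measurable φ) (hφ'm : Measurable φ')
    (B : ℝ) (hB : ∀ᵐ ω ∂μ, |φ' ω| ≤ B)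
    (δ' : ℝ) (hδ' : 0 ≤ δ')
    (hφφ' : (∫⁻ ω, ENNReal.ofReal (|φ ω - φ' ω| ^ r) ∂μ) ^ (1 / r)
      ≤ ENNReal.ofReal δ') :
    (∫⁻ ω, ENNReal.ofReal
        (|φ ω * (κ ω / max (κ ω) (κ' ω))
          - φ' ω * (κ' ω / max (κ ω) (κ' ω))| ^ r) ∂μ) ^ (1 / r)
      ≤ ENNReal.ofReal (δ' + (B / Cl) * δ) := by
  have hr0 : (0:ℝ) ≤ r := le_trans zero_le_one hr1
  have hrpos : (0:ℝ) < r := lt_of_lt_of_le zero_lt_one hr1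
  have hBnn : 0 ≤ B := by
    obtain ⟨ω, hω⟩ := hB.exists
    exact le_trans (abs_nonneg _) hω
  have hBC : 0 ≤ B / Cl := div_nonneg hBnn hCl.le
  set f : Ω → ℝ := fun ω =>
    φ ω * (κ ω / max (κ ω) (κ' ω)) - φ' ω * (κ' ω / max (κ ω) (κ' ω)) with hf
  set g1 : Ω → ℝ := fun ω => |φ ω - φ' ω| with hg1
  set g2 : Ω → ℝ := fun ω => (B / Cl) * |κ ω - κ' ω| with hg2
  -- pointwise a.e. bound
  have hbound : ∀ᵐ ω ∂μ, ‖f ω‖ ≤ ‖g1 ω + g2 ω‖ := by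
    filter_upwards [hB] with ω hBω
    have hmax : Cl ≤ max (κ ω) (κ' ω) := le_trans (hκ ω).1 (le_max_left _ _)
    have hmaxpos : 0 < max (κ ω) (κ' ω) := lt_of_lt_of_le hCl hmax
    have hH1 : κ ω / max (κ ω) (κ' ω) ≤ 1 :=
      div_le_one_of_le₀ (le_max_left _ _) hmaxpos.le
    have hH1nn : 0 ≤ κ ω / max (κ ω) (κ' ω) :=
      div_nonneg (le_trans hCl.le (hκ ω).1) hmaxpos.le
    have key : f ω = (φ ω - φ' ω) * (κ ω / max (κ ω) (κ' ω))
        + φ' ω * ((κ ω - κ' ω) / max (κ ω) (κ' ω)) := by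
      simp only [hf]
      ring
    have h1 : |(φ ω - φ' ω) * (κ ω / max (κ ω) (κ' ω))| ≤ |φ ω - φ' ω| := by
      rw [abs_mul, abs_of_nonneg hH1nn]
      exact mul_le_of_le_one_right (abs_nonneg _) hH1
    have h2 : |φ' ω * ((κ ω - κ' ω) / max (κ ω) (κ' ω))|
        ≤ (B / Cl) * |κ ω - κ' ω| := by
      rw [abs_mul, abs_div, abs_of_pos hmaxpos]
      calc |φ' ω| * (|κ ω - κ' ω| / max (κ ω) (κ' ω))
          ≤ B * (|κ ω - κ' ω| / Cl) := by
            apply mul_le_mul hBω _ (by positivity) hBnn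
            exact div_le_div_of_nonneg_left (abs_nonneg _) hCl hmax
        _ = (B / Cl) * |κ ω - κ' ω| := by ring
    have hgnn : 0 ≤ g1 ω + g2 ω := by positivity
    rw [Real.norm_eq_abs, Real.norm_eq_abs, abs_of_nonneg hgnn, key]
    exact le_trans (abs_add_le _ _) (add_le_add h1 h2)
  rw [lint_eq_eLpNorm' μ f hr0]
  rw [lint_eq_eLpNorm' μ (fun ω => κ ω - κ' ω) hr0] at hκκ'
  rw [lint_eq_eLpNorm' μ (fun ω => φ ω - φ' ω) hr0] at hφφ'
  have step1 : eLpNorm' f r μ ≤ eLpNorm' (g1 + g2) r μ :=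
    eLpNorm'_mono_ae hr0 hbound
  have hg1m : AEStronglyMeasurable g1 μ :=
    ((hφm.sub hφ'm).abs).aestronglyMeasurable
  have hg2m : AEStronglyMeasurable g2 μ :=
    (measurable_const.mul ((hκm.sub hκ'm).abs)).aestronglyMeasurable
  have step2 : eLpNorm' (g1 + g2) r μ ≤ eLpNorm' g1 r μ + eLpNorm' g2 r μ :=
    eLpNorm'_add_le hg1m hg2m hr1
  have eg1 : eLpNorm' g1 r μ = eLpNorm' (fun ω => φ ω - φ' ω) r μ := by
    simp [eLpNorm', hg1]
  have eg2 : eLpNorm' g2 r μ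
      = ENNReal.ofReal (B / Cl) * eLpNorm' (fun ω => κ ω - κ' ω) r μ := by
    have : g2 = (B / Cl) • (fun ω => |κ ω - κ' ω|) := by
      funext ω; simp [hg2]
    rw [this, eLpNorm'_const_smul _ hrpos]
    have habs : eLpNorm' (fun ω => |κ ω - κ' ω|) r μ
        = eLpNorm' (fun ω => κ ω - κ' ω) r μ := by
      simp [eLpNorm']
    rw [habs, ← Real.enorm_eq_ofReal hBC]
  calc eLpNorm' f r μ ≤ eLpNorm' g1 r μ + eLpNorm' g2 r μ :=
        le_trans step1 step2
    _ ≤ ENNReal.ofReal δ' + ENNReal.ofReal (B / Cl) * ENNReal.ofReal δ := by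
        rw [eg1, eg2]
        exact add_le_add hφφ' (mul_le_mul_right hκκ' _)
    _ = ENNReal.ofReal (δ' + (B / Cl) * δ) := by
        rw [← ENNReal.ofReal_mul hBC, ← ENNReal.ofReal_add hδ' (by positivity)]
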